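/- If a multiset S of n reals contains at most p values that differ from honest values, in the sense that S is obtained from a multiset T of honest values by arbitrarily changing at most p elements, and all honest values lie in an interval [a, b], then Γ_p(S)/n ∈ [a, b]. -/

import Mathlib

/-- Trimmed-sum operator `Γ_p`: sort, replace the `p` smallest and `p` largest entries by
the mean of the remaining `n - 2p` entries, and return the sum of the resulting list. -/
noncomputable def trimmedSum (p : ℕ) (l : List ℝ) : ℝ :=
  let s := l.mergeSort (· ≤ ·)
  let mid := (s.drop p).take (l.length - 2 * p)
  mid.sum + 2 * p * (mid.sum / (l.length - 2 * p))


open Finset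

lemma countP_eq_card_filter_univ (l : List ℝ) (P : ℝ → Prop) [DecidablePred P] :
    l.countP (fun x => decide (P x)) =
      (Finset.univ.filter (fun i : Fin l.length => P (l.get i))).card := by
  conv_lhs => rw [← List.map_get_finRange l, List.countP_map]
  have : (Finset.univ.filter (fun i : Fin l.length => P (l.get i))).card
      = Multiset.countP (fun i : Fin l.length => P (l.get i)) Finset.univ.val := by
    rw [Finset.card, Finset.filter_val, Multiset.countP_eq_card_filter]
  rw [this, Fin.univ_def]
  exact (Multiset.coe_countP _ _).symm

lemma sorted_lb (s : List ℝ) (hs : s.Pairwise (· ≤ ·)) (a : ℝ) (p i : ℕ)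
    (hc : s.countP (fun x => decide (x < a)) ≤ p) (hp : p ≤ i) (h : i < s.length) :
    a ≤ s[i] := by
  by_contra hlt
  push_neg at hlt
  have hall : ∀ x ∈ s.take (i + 1), x < a := by
    intro x hx
    rw [List.mem_iff_getElem] at hx
    obtain ⟨j, hj, rfl⟩ := hx
    rw [List.getElem_take]
    have hj' : j < i + 1 := lt_of_lt_of_le hj (by simp)
    rcases lt_or_eq_of_le (Nat.lt_succ_iff.mp hj') with hji | hji
    · exact lt_of_le_of_lt
        (hs.rel_get_of_lt (a := ⟨j, by omega⟩) (b := ⟨i, h⟩) (by simpa using hji)) hlt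
    · subst hji; exact hlt
  have h1 : (s.take (i + 1)).countP (fun x => decide (x < a)) = i + 1 := by
    rw [List.countP_eq_length.mpr (fun x hx => by simpa using hall x hx)]
    simp [Nat.min_eq_left (by omega : i + 1 ≤ s.length)]
  have h2 := (s.take_sublist (i + 1)).countP_le (p := fun x => decide (x < a))
  omega

lemma sorted_ub (s : List ℝ) (hs : s.Pairwise (· ≤ ·)) (b : ℝ) (p i : ℕ)
    (hc : s.countP (fun x => decide (b < x)) ≤ p) (hp : i + p < s.length)
    (h : i < s.length) : s[i] ≤ b := by
  by_contra hlt
  push_neg at hlt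
  have hall : ∀ x ∈ s.drop i, b < x := by
    intro x hx
    rw [List.mem_iff_getElem] at hx
    obtain ⟨j, hj, rfl⟩ := hx
    rw [List.length_drop] at hj
    rw [List.getElem_drop]
    rcases Nat.eq_zero_or_pos j with hj0 | hj0
    · subst hj0; simpa using hlt
    · exact lt_of_lt_of_le hlt
        (hs.rel_get_of_lt (a := ⟨i, h⟩) (b := ⟨i + j, by omega⟩) (by rw [Fin.mk_lt_mk]; omega))
  have h1 : (s.drop i).countP (fun x => decide (b < x)) = s.length - i := by
    rw [List.countP_eq_length.mpr (fun x hx => by simpa using hall x hx)]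
    simp
  have h2 := (s.drop_sublist i).countP_le (p := fun x => decide (b < x))
  omega

/-- if `S` is obtained from an honest list `T` (all values in `[a,b]`) by
changing at most `p` entries, and `n > 2p`, then `Γ_p(S)/n ∈ [a,b]`. -/
theorem trimmedSum_byzantine_resilient (p : ℕ) (a b : ℝ) (S T : List ℝ)
    (hlen : S.length = T.length) (hn : 2 * p < S.length)
    (hdiff : (Finset.univ.filter
        (fun i : Fin S.length => S.get i ≠ T.get (Fin.cast hlen i))).card ≤ p)
    (honest : ∀ x ∈ T, a ≤ x ∧ x ≤ b) :
    a ≤ trimmedSum p S / S.length ∧ trimmedSum p S / S.length ≤ b := by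
  classical
  set n := S.length with hn'
  set s := S.mergeSort (· ≤ ·) with hs
  have hperm : s.Perm S := S.mergeSort_perm _
  have hsorted : s.Pairwise (· ≤ ·) := List.pairwise_mergeSort' (r := (· ≤ ·)) S
  have hslen : s.length = n := hperm.length_eq
  have hca : s.countP (fun x => decide (x < a)) ≤ p := by
    rw [hperm.countP_eq, countP_eq_card_filter_univ S (fun x => x < a)]
    refine le_trans (Finset.card_le_card ?_) hdiff
    intro i hi
    simp only [mem_filter, mem_univ, true_and] at hi ⊢
    intro h
    have hmem := List.get_mem T (Fin.cast hlen i)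
    have := (honest _ hmem).1
    rw [← h] at this
    linarith
  have hcb : s.countP (fun x => decide (b < x)) ≤ p := by
    rw [hperm.countP_eq, countP_eq_card_filter_univ S (fun x => b < x)]
    refine le_trans (Finset.card_le_card ?_) hdiff
    intro i hi
    simp only [mem_filter, mem_univ, true_and] at hi ⊢
    intro h
    have hmem := List.get_mem T (Fin.cast hlen i)
    have := (honest _ hmem).2
    rw [← h] at this
    linarith
  set mid := (s.drop p).take (n - 2 * p) with hmid
  have hmidlen : mid.length = n - 2 * p := by
    simp [hmid, hslen]
    omega
  have hmem : ∀ x ∈ mid, a ≤ x ∧ x ≤ b := by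
    intro x hx
    rw [List.mem_iff_getElem] at hx
    obtain ⟨j, hj, rfl⟩ := hx
    rw [hmidlen] at hj
    have hidx : p + j < s.length := by omega
    have : mid[j] = s[p + j] := by
      simp [hmid, List.getElem_take, List.getElem_drop]
    rw [this]
    constructor
    · exact sorted_lb s hsorted a p (p + j) hca (by omega) hidx
    · exact sorted_ub s hsorted b p (p + j) hcb (by omega) hidx
  have hm0 : 0 < n - 2 * p := by omega
  have hM : (0 : ℝ) < (n - 2 * p : ℕ) := by exact_mod_cast hm0
  have hN : (0 : ℝ) < (n : ℕ) := by exact_mod_cast (by omega : 0 < n)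
  have hlow : ((n - 2 * p : ℕ) : ℝ) * a ≤ mid.sum := by
    have := List.card_nsmul_le_sum mid a (fun x hx => (hmem x hx).1)
    rwa [hmidlen, nsmul_eq_mul] at this
  have hhigh : mid.sum ≤ ((n - 2 * p : ℕ) : ℝ) * b := by
    have := List.sum_le_card_nsmul mid b (fun x hx => (hmem x hx).2)
    rwa [hmidlen, nsmul_eq_mul] at this
  have hts : trimmedSum p S = mid.sum + 2 * p * (mid.sum / ((n - 2 * p : ℕ) : ℝ)) := by
    simp only [trimmedSum, ← hs, ← hn', ← hmid]
    rw [Nat.cast_sub (by omega : 2 * p ≤ n)]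
    push_cast
    ring
  have hNM : ((n : ℕ) : ℝ) = ((n - 2 * p : ℕ) : ℝ) + 2 * p := by
    push_cast [Nat.cast_sub (by omega : 2 * p ≤ n)]
    ring
  have heq : trimmedSum p S / n = mid.sum / ((n - 2 * p : ℕ) : ℝ) := by
    rw [hts, hNM]
    field_simp
  rw [heq]
  constructor
  · rw [le_div_iff₀ hM]; linarith
  · rw [div_le_iff₀ hM]; linarith
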